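/- Let (X,Σ,μ) be a probability space and T the Koopman operator of a measure preserving transformation. Fix 0<r<1. If f ∈ (I-T)L^r(μ), then liminf_n |M_n f| = 0 μ-a.e. -/

import Mathlib

open MeasureTheory Filter Topology ENNReal

lemma aux_liminf_zero {r : ℝ} (hr0 : 0 < r) (u : ℕ → ℝ)
    (hl : Filter.liminf (fun n => ENNReal.ofReal (|u n| ^ r)) atTop = 0) :
    Filter.liminf (fun n => |u n|) atTop = 0 := by
  have hfreq : ∀ ε : ℝ, 0 < ε → ∃ᶠ n in atTop, |u n| ≤ ε := by
    intro ε hε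
    have h1 : Filter.liminf (fun n => ENNReal.ofReal (|u n| ^ r)) atTop
        < ENNReal.ofReal (ε ^ r) := by
      rw [hl]
      exact ENNReal.ofReal_pos.2 (Real.rpow_pos_of_pos hε r)
    have h2 := Filter.frequently_lt_of_liminf_lt (by isBoundedDefault) h1
    refine h2.mono fun n hn => ?_
    by_contra h
    push_neg at h
    have : ENNReal.ofReal (ε ^ r) ≤ ENNReal.ofReal (|u n| ^ r) :=
      ENNReal.ofReal_le_ofReal (Real.rpow_le_rpow hε.le h.le hr0.le)
    exact absurd hn (not_lt.2 this)
  have hcob : Filter.IsCoboundedUnder (· ≥ ·) atTop (fun n => |u n|) :=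
    Filter.IsCoboundedUnder.of_frequently_le (hfreq 1 one_pos)
  have hbd : Filter.IsBoundedUnder (· ≥ ·) atTop (fun n => |u n|) :=
    Filter.isBoundedUnder_of ⟨0, fun n => abs_nonneg _⟩
  refine le_antisymm ?_ (Filter.le_liminf_of_le hcob
    (Filter.Eventually.of_forall fun n => abs_nonneg _))
  refine le_of_forall_pos_le_add fun ε hε => ?_
  have := Filter.liminf_le_of_frequently_le (hfreq ε hε) hbd
  linarith

/-- If `f = (I-T)g` is a coboundary with `g ∈ L^r(μ)`, `0 < r < 1`, then
`liminf_n |M_n f| = 0` a.e. -/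
theorem stmt9 {X : Type*} [MeasurableSpace X] (μ : Measure X) [IsProbabilityMeasure μ]
    (θ : X → X) (hθ : MeasurePreserving θ μ μ) (r : ℝ) (hr0 : 0 < r) (hr1 : r < 1)
    (g : X → ℝ) (hg : Measurable g)
    (hgLr : ∫⁻ x, ENNReal.ofReal (|g x| ^ r) ∂μ < ⊤)
    (f : X → ℝ) (hf : f = fun x => g x - g (θ x)) :
    ∀ᵐ x ∂μ, Filter.liminf
      (fun n : ℕ => |(1 / (n : ℝ)) * ∑ k ∈ Finset.range n, f (θ^[k] x)|) atTop = 0 := by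
  -- the Birkhoff averages
  set u : ℕ → X → ℝ := fun n x => (1 / (n : ℝ)) * ∑ k ∈ Finset.range n, f (θ^[k] x) with hu
  -- telescoping
  have hsum : ∀ n x, u n x = (1 / (n : ℝ)) * (g x - g (θ^[n] x)) := by
    intro n x
    have : ∑ k ∈ Finset.range n, f (θ^[k] x)
        = g (θ^[0] x) - g (θ^[n] x) := by
      rw [← Finset.sum_range_sub' (fun k => g (θ^[k] x)) n]
      refine Finset.sum_congr rfl fun k _ => ?_
      rw [hf]
      simp [Function.iterate_succ_apply']
    simp only [hu, this, Function.iterate_zero_apply]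
  have hgm : ∀ n, Measurable fun x => g (θ^[n] x) := fun n =>
    hg.comp (hθ.measurable.iterate n)
  have hfm : Measurable f := by
    rw [hf]; exact hg.sub (hg.comp hθ.measurable)
  have hum : ∀ n, Measurable (u n) := by
    intro n
    refine Measurable.const_mul ?_ _
    exact Finset.measurable_sum _ fun k _ => hfm.comp (hθ.measurable.iterate k)
  have hrm : Measurable fun t : ℝ => t ^ r := (Real.continuous_rpow_const hr0.le).measurable
  have hGm : Measurable fun x => ENNReal.ofReal (|g x| ^ r) :=
    ENNReal.measurable_ofReal.comp (hrm.comp hg.abs)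
  have hGm' : ∀ n, Measurable fun x => ENNReal.ofReal (|g (θ^[n] x)| ^ r) := fun n =>
    ENNReal.measurable_ofReal.comp (hrm.comp (hgm n).abs)
  set w : ℕ → X → ℝ≥0∞ := fun n x => ENNReal.ofReal (|u n x| ^ r) with hw
  have hwm : ∀ n, Measurable (w n) := fun n =>
    ENNReal.measurable_ofReal.comp (hrm.comp (hum n).abs)
  set C : ℝ≥0∞ := ∫⁻ x, ENNReal.ofReal (|g x| ^ r) ∂μ with hC
  -- pointwise bound
  have hpt : ∀ n x, w n x ≤ (ENNReal.ofReal (1 / (n : ℝ))) ^ r *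
      (ENNReal.ofReal (|g x| ^ r) + ENNReal.ofReal (|g (θ^[n] x)| ^ r)) := by
    intro n x
    have h1 : |u n x| ≤ (1 / (n : ℝ)) * (|g x| + |g (θ^[n] x)|) := by
      rw [hsum n x, abs_mul]
      have : |(1 : ℝ) / n| = 1 / (n : ℝ) := abs_of_nonneg (by positivity)
      rw [this]
      exact mul_le_mul_of_nonneg_left (abs_sub _ _) (by positivity)
    have h2 : ENNReal.ofReal |u n x| ≤
        ENNReal.ofReal (1 / (n : ℝ)) * (ENNReal.ofReal |g x| + ENNReal.ofReal |g (θ^[n] x)|) := by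
      calc ENNReal.ofReal |u n x| ≤ ENNReal.ofReal ((1 / (n : ℝ)) * (|g x| + |g (θ^[n] x)|)) :=
            ENNReal.ofReal_le_ofReal h1
        _ = _ := by
            rw [ENNReal.ofReal_mul (by positivity), ENNReal.ofReal_add (abs_nonneg _) (abs_nonneg _)]
    calc w n x = (ENNReal.ofReal |u n x|) ^ r := by
          rw [hw]; exact (ENNReal.ofReal_rpow_of_nonneg (abs_nonneg _) hr0.le).symm
      _ ≤ ((ENNReal.ofReal (1 / (n : ℝ))) *
            (ENNReal.ofReal |g x| + ENNReal.ofReal |g (θ^[n] x)|)) ^ r :=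
          ENNReal.rpow_le_rpow h2 hr0.le
      _ = (ENNReal.ofReal (1 / (n : ℝ))) ^ r *
            ((ENNReal.ofReal |g x| + ENNReal.ofReal |g (θ^[n] x)|)) ^ r := by
          rw [ENNReal.mul_rpow_of_nonneg _ _ hr0.le]
      _ ≤ (ENNReal.ofReal (1 / (n : ℝ))) ^ r *
            ((ENNReal.ofReal |g x|) ^ r + (ENNReal.ofReal |g (θ^[n] x)|) ^ r) :=
          mul_le_mul_right (ENNReal.rpow_add_le_add_rpow _ _ hr0.le hr1.le) _
      _ = _ := by
          rw [ENNReal.ofReal_rpow_of_nonneg (abs_nonneg _) hr0.le,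
            ENNReal.ofReal_rpow_of_nonneg (abs_nonneg _) hr0.le]
  -- integral bound
  have hint : ∀ n, ∫⁻ x, w n x ∂μ ≤ (ENNReal.ofReal (1 / (n : ℝ))) ^ r * (C + C) := by
    intro n
    calc ∫⁻ x, w n x ∂μ
        ≤ ∫⁻ x, (ENNReal.ofReal (1 / (n : ℝ))) ^ r *
            (ENNReal.ofReal (|g x| ^ r) + ENNReal.ofReal (|g (θ^[n] x)| ^ r)) ∂μ :=
          lintegral_mono (hpt n)
      _ = (ENNReal.ofReal (1 / (n : ℝ))) ^ r *
            ∫⁻ x, (ENNReal.ofReal (|g x| ^ r) + ENNReal.ofReal (|g (θ^[n] x)| ^ r)) ∂μ :=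
          lintegral_const_mul _ (hGm.add (hGm' n))
      _ = (ENNReal.ofReal (1 / (n : ℝ))) ^ r * (C + C) := by
          congr 1
          rw [lintegral_add_left hGm]
          congr 1
          exact (hθ.iterate n).lintegral_comp hGm
  -- the bound tends to 0
  have hto : Tendsto (fun n : ℕ => (ENNReal.ofReal (1 / (n : ℝ))) ^ r * (C + C)) atTop (𝓝 0) := by
    have h1 : Tendsto (fun n : ℕ => ENNReal.ofReal (1 / (n : ℝ))) atTop (𝓝 0) := by
      have := ENNReal.tendsto_ofReal (tendsto_one_div_atTop_nhds_zero_nat)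
      simpa using this
    have h2 : Tendsto (fun n : ℕ => (ENNReal.ofReal (1 / (n : ℝ))) ^ r) atTop (𝓝 0) := by
      have := ((ENNReal.continuous_rpow_const (y := r)).tendsto 0).comp h1
      simpa [Function.comp_def, ENNReal.zero_rpow_of_pos hr0] using this
    have hCfin : C + C ≠ ⊤ := by
      simp only [Ne, ENNReal.add_eq_top, not_or]
      exact ⟨hgLr.ne, hgLr.ne⟩
    simpa using ENNReal.Tendsto.mul_const h2 (Or.inr hCfin)
  -- Fatou
  have hFatou : ∫⁻ x, Filter.liminf (fun n => w n x) atTop ∂μ = 0 := by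
    refine le_antisymm ?_ zero_le
    calc ∫⁻ x, Filter.liminf (fun n => w n x) atTop ∂μ
        ≤ Filter.liminf (fun n => ∫⁻ x, w n x ∂μ) atTop := lintegral_liminf_le hwm
      _ ≤ Filter.liminf (fun n : ℕ => (ENNReal.ofReal (1 / (n : ℝ))) ^ r * (C + C)) atTop :=
          Filter.liminf_le_liminf (Filter.Eventually.of_forall hint)
      _ = 0 := hto.liminf_eq
  have hae : ∀ᵐ x ∂μ, Filter.liminf (fun n => w n x) atTop = 0 := by
    have := (lintegral_eq_zero_iff (Measurable.liminf hwm)).1 hFatou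
    exact this
  filter_upwards [hae] with x hx
  exact aux_liminf_zero hr0 (fun n => u n x) hx
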